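/- Low-rank approximation guarantee for k-DPPs: if S ~ k-DPP_L(XX^T) with k ≥ r + r/ε − 1, then E[||X X_S^† X_S − X||_F^2] ≤ (1+ε) ||X_{(r)} − X||_F^2, where X_{(r)} is the best rank-r approximation of X in Frobenius norm. -/

import Mathlib

open Matrix

/-- The principal submatrix determinant `det(M_{S,S})`. -/
noncomputable def subdet {n : ℕ} (M : Matrix (Fin n) (Fin n) ℝ) (S : Finset (Fin n)) : ℝ :=
  (M.submatrix (fun i : {x // x ∈ S} => (i : Fin n)) (fun j : {x // x ∈ S} => (j : Fin n))).det

/-- The row submatrix `X_S` of `X` (rows indexed by the subset `S`). -/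
noncomputable def rowsOf {n d : ℕ} (X : Matrix (Fin n) (Fin d) ℝ) (S : Finset (Fin n)) :
    Matrix {x // x ∈ S} (Fin d) ℝ :=
  X.submatrix (fun i : {x // x ∈ S} => (i : Fin n)) id

section Aux

open Polynomial

lemma det_piecewise_one {R : Type*} [CommRing R] {n : ℕ} (M : Matrix (Fin n) (Fin n) R) (S : Finset (Fin n)) :
    (Matrix.of (S.piecewise M (1 : Matrix (Fin n) (Fin n) R))).det
      = (M.submatrix (fun i : {x // x ∈ S} => (i : Fin n))
          (fun j : {x // x ∈ S} => (j : Fin n))).det := by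
  set N : Matrix (Fin n) (Fin n) R := Matrix.of (S.piecewise M (1 : Matrix (Fin n) (Fin n) R))
    with hN
  have hNmem : ∀ i j : Fin n, i ∈ S → N i j = M i j := fun i j hi => by
    simp [hN, Finset.piecewise, hi]
  have hNnot : ∀ i j : Fin n, i ∉ S → N i j = (1 : Matrix (Fin n) (Fin n) R) i j :=
    fun i j hi => by
    simp [hN, Finset.piecewise, hi]
  let e : {a // a ∈ S} ⊕ {a // ¬ a ∈ S} ≃ Fin n := Equiv.sumCompl (· ∈ S)
  have h1 : N.submatrix e e = fromBlocks
      (M.submatrix (fun i : {x // x ∈ S} => (i : Fin n)) (fun j : {x // x ∈ S} => (j : Fin n)))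
      (M.submatrix (fun i : {x // x ∈ S} => (i : Fin n)) (fun j : {x // ¬ x ∈ S} => (j : Fin n)))
      0 1 := by
    ext i j
    cases i with
    | inl i =>
      cases j with
      | inl j =>
        show N i j = M i j
        exact hNmem i j i.2
      | inr j =>
        show N i j = M i j
        exact hNmem i j i.2
    | inr i =>
      cases j with
      | inl j =>
        show N i j = 0
        rw [hNnot i j i.2, one_apply_ne]
        intro h; exact i.2 (h ▸ j.2)
      | inr j =>
        show N i j = (1 : Matrix {a // ¬ a ∈ S} {a // ¬ a ∈ S} R) i j
        rw [hNnot i j i.2]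
        by_cases h : i = j
        · subst h; rw [one_apply_eq, one_apply_eq]
        · rw [one_apply_ne, one_apply_ne h]
          exact fun hc => h (Subtype.ext hc)
  calc N.det = (N.submatrix e e).det := (det_submatrix_equiv_self e N).symm
  _ = _ := by rw [h1, det_fromBlocks_zero₂₁, det_one, mul_one]


lemma det_one_add_eq_sum {R : Type*} [CommRing R] {n : ℕ} (M : Matrix (Fin n) (Fin n) R) :
    (1 + M).det = ∑ S : Finset (Fin n),
      (M.submatrix (fun i : {x // x ∈ S} => (i : Fin n))
        (fun j : {x // x ∈ S} => (j : Fin n))).det := by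
  rw [add_comm]
  have h := MultilinearMap.map_add_univ
    (Matrix.detRowAlternating (R := R) (n := Fin n)).toMultilinearMap
    (fun i => M i) (fun i => (1 : Matrix (Fin n) (Fin n) R) i)
  have h2 : (M + 1).det = ∑ S : Finset (Fin n), (Matrix.of (S.piecewise M (1 : Matrix (Fin n) (Fin n) R))).det := h
  rw [h2]
  exact Finset.sum_congr rfl fun S _ => det_piecewise_one M S


lemma prod_one_add_mul_X {ι : Type*} [DecidableEq ι] (s : Finset ι) (f : ι → ℝ) :
    ∏ i ∈ s, (1 + C (f i) * X) = ∑ T ∈ s.powerset, C (∏ i ∈ T, f i) * X ^ T.card := by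
  induction s using Finset.induction with
  | empty => simp
  | @insert a s ha ih =>
    rw [Finset.prod_insert ha, ih, Finset.sum_powerset_insert ha]
    rw [add_mul, one_mul, Finset.mul_sum]
    congr 1
    refine Finset.sum_congr rfl fun T hT => ?_
    have haT : a ∉ T := fun h => ha (Finset.mem_powerset.1 hT h)
    rw [Finset.prod_insert haT, Finset.card_insert_of_notMem haT, C_mul, pow_succ]
    ring


lemma coeff_sum_C_mul_pow {n : ℕ} (g : Finset (Fin n) → ℝ) (k : ℕ) :
    (∑ S : Finset (Fin n), C (g S) * X ^ S.card).coeff k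
      = ∑ S ∈ Finset.powersetCard k (Finset.univ : Finset (Fin n)), g S := by
  rw [finset_sum_coeff, Finset.powersetCard_eq_filter, Finset.sum_filter, Finset.powerset_univ]
  refine Finset.sum_congr rfl fun S _ => ?_
  rw [coeff_C_mul, coeff_X_pow]
  by_cases h : S.card = k
  · simp [h]
  · simp [h, Ne.symm h]


lemma prod_one_add_mul_X_coeff {ι : Type*} [DecidableEq ι] (s : Finset ι) (f : ι → ℝ) (k : ℕ) :
    (∏ i ∈ s, (1 + C (f i) * X)).coeff k
      = ∑ T ∈ Finset.powersetCard k s, ∏ i ∈ T, f i := by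
  rw [prod_one_add_mul_X, finset_sum_coeff, Finset.powersetCard_eq_filter, Finset.sum_filter]
  refine Finset.sum_congr rfl fun T _ => ?_
  rw [coeff_C_mul, coeff_X_pow]
  by_cases h : T.card = k
  · simp [h]
  · simp [h, Ne.symm h]


lemma sum_subdet_eq_esymm {n : ℕ} (A : Matrix (Fin n) (Fin n) ℝ) (hA : A.IsHermitian) (k : ℕ) :
    ∑ S ∈ Finset.powersetCard k Finset.univ, subdet A S
      = ∑ T ∈ Finset.powersetCard k Finset.univ, ∏ i ∈ T, hA.eigenvalues i := by
  obtain ⟨U, lam, hUtU, hspec, hlam⟩ : ∃ (U : Matrix (Fin n) (Fin n) ℝ) (lam : Fin n → ℝ),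
      Uᵀ * U = 1 ∧ A = U * Matrix.diagonal lam * Uᵀ ∧ lam = hA.eigenvalues := by
    refine ⟨(hA.eigenvectorUnitary : Matrix (Fin n) (Fin n) ℝ), hA.eigenvalues, ?_, ?_, rfl⟩
    · have := Unitary.coe_star_mul_self hA.eigenvectorUnitary
      simpa [Matrix.star_eq_conjTranspose,
        Matrix.conjTranspose_eq_transpose_of_trivial] using this
    · have := hA.spectral_theorem
      simpa [Matrix.star_eq_conjTranspose, Matrix.conjTranspose_eq_transpose_of_trivial,
        Function.comp] using this
  rw [← hlam]
  have h1 : (1 + (X : Polynomial ℝ) • (A.map C)).det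
      = ∑ S : Finset (Fin n), C (subdet A S) * X ^ S.card := by
    rw [det_one_add_eq_sum]
    refine Finset.sum_congr rfl fun S _ => ?_
    have hsub : ((X : Polynomial ℝ) • A.map C).submatrix
        (fun i : {x // x ∈ S} => (i : Fin n)) (fun j : {x // x ∈ S} => (j : Fin n))
        = (X : Polynomial ℝ) • ((A.submatrix (fun i : {x // x ∈ S} => (i : Fin n))
            (fun j : {x // x ∈ S} => (j : Fin n))).map C) := by
      ext i j; simp [Matrix.submatrix_apply]
    rw [hsub, Matrix.det_smul, Fintype.card_coe, ← RingHom.mapMatrix_apply,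
      ← RingHom.map_det, subdet, mul_comm]
  have h2 : (1 + (X : Polynomial ℝ) • (A.map C)).det = ∏ i, (1 + C (lam i) * X) := by
    rw [hspec]
    have hmap : ((U * Matrix.diagonal lam * Uᵀ).map (C : ℝ →+* Polynomial ℝ))
        = U.map C * (Matrix.diagonal lam).map C * (U.map C)ᵀ := by
      rw [Matrix.map_mul, Matrix.map_mul, Matrix.transpose_map]
    rw [hmap]
    have hsmul : (X : Polynomial ℝ) • (U.map C * (Matrix.diagonal lam).map C
        * (U.map C)ᵀ) = (U.map C * ((X : Polynomial ℝ) • (Matrix.diagonal lam).map C))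
        * (U.map C)ᵀ := by
      rw [Matrix.mul_smul, Matrix.smul_mul]
    rw [hsmul, Matrix.det_one_add_mul_comm, ← Matrix.mul_assoc]
    have hUU : (U.map (C : ℝ →+* Polynomial ℝ))ᵀ * U.map C = 1 := by
      rw [← Matrix.transpose_map, ← Matrix.map_mul, hUtU]
      simp
    rw [hUU, Matrix.one_mul]
    have hdiag : (1 : Matrix (Fin n) (Fin n) (Polynomial ℝ)) + (X : Polynomial ℝ) •
        (Matrix.diagonal lam).map C
        = Matrix.diagonal (fun i => 1 + C (lam i) * X) := by
      ext i j
      by_cases h : i = j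
      · subst h
        simp only [Matrix.add_apply, Matrix.one_apply_eq, Matrix.smul_apply,
          Matrix.map_apply, Matrix.diagonal_apply_eq, smul_eq_mul]
        rw [mul_comm]
      · simp [Matrix.one_apply_ne h, Matrix.diagonal_apply_ne _ h]
    rw [hdiag, Matrix.det_diagonal]
  have hcoeff := congrArg (fun p => Polynomial.coeff p k) (h1.symm.trans h2)
  rwa [prod_one_add_mul_X_coeff Finset.univ lam k, coeff_sum_C_mul_pow] at hcoeff


lemma count_pairs {n k : ℕ} (g : Finset (Fin n) → Fin n → ℝ) :
    ∑ S ∈ Finset.powersetCard k (Finset.univ : Finset (Fin n)), ∑ i ∈ Sᶜ, g (insert i S) i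
      = ∑ T ∈ Finset.powersetCard (k+1) (Finset.univ : Finset (Fin n)), ∑ i ∈ T, g T i := by
  rw [Finset.sum_sigma', Finset.sum_sigma']
  refine Finset.sum_nbij' (fun p => ⟨insert p.2 p.1, p.2⟩) (fun q => ⟨q.1.erase q.2, q.2⟩)
    ?_ ?_ ?_ ?_ ?_
  · rintro ⟨S, i⟩ hp
    simp only [Finset.mem_sigma, Finset.mem_powersetCard_univ, Finset.mem_compl] at hp
    simp only [Finset.mem_sigma, Finset.mem_powersetCard_univ, Finset.mem_insert]
    exact ⟨by rw [Finset.card_insert_of_notMem hp.2, hp.1], Or.inl trivial⟩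
  · rintro ⟨T, i⟩ hq
    simp only [Finset.mem_sigma, Finset.mem_powersetCard_univ] at hq
    simp only [Finset.mem_sigma, Finset.mem_powersetCard_univ, Finset.mem_compl,
      Finset.mem_erase]
    constructor
    · rw [Finset.card_erase_of_mem hq.2, hq.1]; omega
    · simp
  · rintro ⟨S, i⟩ hp
    simp only [Finset.mem_sigma, Finset.mem_powersetCard_univ, Finset.mem_compl] at hp
    simp only [Sigma.mk.inj_iff, heq_eq_eq, and_true]
    rw [Finset.erase_insert hp.2]
  · rintro ⟨T, i⟩ hq
    simp only [Finset.mem_sigma, Finset.mem_powersetCard_univ] at hq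
    simp only [Sigma.mk.inj_iff, heq_eq_eq, and_true]
    rw [Finset.insert_erase hq.2]
  · rintro ⟨S, i⟩ hp
    rfl


lemma esymm_tail_bound {n k r : ℕ} (lam c : Fin n → ℝ) (hlam : ∀ i, 0 ≤ lam i)
    (hc0 : ∀ i, 0 ≤ c i) (hc1 : ∀ i, c i ≤ 1) (hcs : (n : ℝ) - r ≤ ∑ i, c i) :
    ((k : ℝ) + 1 - r) * ∑ T ∈ Finset.powersetCard (k+1) Finset.univ, ∏ i ∈ T, lam i
      ≤ (∑ i, lam i * c i) * ∑ S ∈ Finset.powersetCard k Finset.univ, ∏ i ∈ S, lam i := by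
  have key : ∀ T ∈ Finset.powersetCard (k+1) (Finset.univ : Finset (Fin n)),
      ((k : ℝ) + 1 - r) ≤ ∑ i ∈ T, c i := by
    intro T hT
    rw [Finset.mem_powersetCard_univ] at hT
    have hkn : k + 1 ≤ n := by
      have := Finset.card_le_univ T
      rwa [hT, Fintype.card_fin] at this
    have hcomp : ∑ i ∈ Tᶜ, c i ≤ ((n : ℝ) - (k+1)) := by
      have hcard : (Tᶜ.card : ℝ) = (n : ℝ) - (k+1) := by
        rw [Finset.card_compl, hT]
        rw [Fintype.card_fin, Nat.cast_sub hkn]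
        push_cast
        ring
      calc ∑ i ∈ Tᶜ, c i ≤ ∑ i ∈ Tᶜ, 1 := Finset.sum_le_sum fun i _ => hc1 i
      _ = (Tᶜ.card : ℝ) := by simp
      _ = _ := hcard
    have hsplit : ∑ i ∈ T, c i = (∑ i, c i) - ∑ i ∈ Tᶜ, c i := by
      rw [← Finset.sum_add_sum_compl T c]; ring
    rw [hsplit]
    have := sub_le_sub hcs hcomp
    linarith [this]
  calc ((k : ℝ) + 1 - r) * ∑ T ∈ Finset.powersetCard (k+1) Finset.univ, ∏ i ∈ T, lam i
      = ∑ T ∈ Finset.powersetCard (k+1) (Finset.univ : Finset (Fin n)),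
          ((k : ℝ) + 1 - r) * ∏ i ∈ T, lam i := Finset.mul_sum _ _ _
    _ ≤ ∑ T ∈ Finset.powersetCard (k+1) (Finset.univ : Finset (Fin n)),
          (∑ i ∈ T, c i) * ∏ i ∈ T, lam i := by
        refine Finset.sum_le_sum fun T hT => ?_
        exact mul_le_mul_of_nonneg_right (key T hT)
          (Finset.prod_nonneg fun i _ => hlam i)
    _ = ∑ T ∈ Finset.powersetCard (k+1) (Finset.univ : Finset (Fin n)),
          ∑ i ∈ T, c i * ∏ j ∈ T, lam j := by
        refine Finset.sum_congr rfl fun T _ => ?_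
        rw [Finset.sum_mul]
    _ = ∑ S ∈ Finset.powersetCard k (Finset.univ : Finset (Fin n)),
          ∑ i ∈ Sᶜ, c i * ∏ j ∈ insert i S, lam j :=
        (count_pairs fun T i => c i * ∏ j ∈ T, lam j).symm
    _ = ∑ S ∈ Finset.powersetCard k (Finset.univ : Finset (Fin n)),
          ∑ i ∈ Sᶜ, (lam i * c i) * ∏ j ∈ S, lam j := by
        refine Finset.sum_congr rfl fun S _ => Finset.sum_congr rfl fun i hi => ?_
        rw [Finset.mem_compl] at hi
        rw [Finset.prod_insert hi]; ring
    _ ≤ ∑ S ∈ Finset.powersetCard k (Finset.univ : Finset (Fin n)),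
          ∑ i, (lam i * c i) * ∏ j ∈ S, lam j := by
        refine Finset.sum_le_sum fun S _ => ?_
        refine Finset.sum_le_sum_of_subset_of_nonneg (Finset.subset_univ _) fun i _ _ => ?_
        exact mul_nonneg (mul_nonneg (hlam i) (hc0 i)) (Finset.prod_nonneg fun j _ => hlam j)
    _ = (∑ i, lam i * c i) * ∑ S ∈ Finset.powersetCard k Finset.univ, ∏ i ∈ S, lam i := by
        rw [Finset.sum_comm, Finset.sum_mul]
        refine Finset.sum_congr rfl fun i _ => ?_
        rw [Finset.mul_sum]


lemma exists_onb_cols {n d : ℕ} (B : Matrix (Fin n) (Fin d) ℝ) :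
    ∃ (m : ℕ) (w : Fin m → (Fin n → ℝ)),
      m = B.rank ∧
      (∀ l l' : Fin m, ∑ a, w l a * w l' a = if l = l' then 1 else 0) ∧
      (∀ j : Fin d, ∀ a, ∑ l, (∑ b, w l b * B b j) * w l a = B a j) := by
  classical
  let e : (Fin n → ℝ) ≃ₗ[ℝ] EuclideanSpace ℝ (Fin n) :=
    (WithLp.linearEquiv 2 ℝ (Fin n → ℝ)).symm
  let V : Submodule ℝ (EuclideanSpace ℝ (Fin n)) :=
    Submodule.span ℝ (Set.range (fun j => e (Bᵀ j)))
  have hVrank : Module.finrank ℝ V = B.rank := by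
    have h1 : B.rank = Module.finrank ℝ (Submodule.span ℝ (Set.range Bᵀ)) :=
      Matrix.rank_eq_finrank_span_cols B
    have h2 : V = (Submodule.span ℝ (Set.range Bᵀ)).map e.toLinearMap := by
      rw [Submodule.map_span]
      exact congrArg (Submodule.span ℝ) (Set.range_comp (⇑(e : (Fin n → ℝ) →ₗ[ℝ] EuclideanSpace ℝ (Fin n))) (Bᵀ : Fin d → Fin n → ℝ))
    rw [h2, LinearEquiv.finrank_map_eq, h1]
  set m := Module.finrank ℝ V with hm
  let b : OrthonormalBasis (Fin m) ℝ V := stdOrthonormalBasis ℝ V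
  have hinner : ∀ x y : V, (inner ℝ x y : ℝ) = ∑ a, (x : EuclideanSpace ℝ (Fin n)) a * (y : EuclideanSpace ℝ (Fin n)) a := by
    intro x y
    rw [Submodule.coe_inner, PiLp.inner_apply]
    simp [RCLike.inner_apply, conj_trivial]
    exact Finset.sum_congr rfl fun _ _ => mul_comm _ _
  refine ⟨m, fun l => (b l : EuclideanSpace ℝ (Fin n)), hVrank, ?_, ?_⟩
  · intro l l'
    rw [← hinner]
    exact orthonormal_iff_ite.mp b.orthonormal l l'
  · intro j a
    have hmem : e (Bᵀ j) ∈ V := Submodule.subset_span ⟨j, rfl⟩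
    have hrepr := b.sum_repr' ⟨e (Bᵀ j), hmem⟩
    have := congrArg (fun v : V => (v : EuclideanSpace ℝ (Fin n)) a) hrepr
    simp only at this
    rw [show B a j = e (Bᵀ j) a from rfl, ← this]
    push_cast [Submodule.coe_sum]
    rw [WithLp.ofLp_sum, Finset.sum_apply]
    refine Finset.sum_congr rfl fun l _ => ?_
    rw [hinner]
    simp only [Submodule.coe_smul, PiLp.smul_apply, smul_eq_mul]
    rfl


lemma exists_projW {n d : ℕ} (B : Matrix (Fin n) (Fin d) ℝ) :
    ∃ (m : ℕ) (W : Matrix (Fin m) (Fin n) ℝ),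
      m = B.rank ∧ W * Wᵀ = 1 ∧ Wᵀ * (W * B) = B := by
  obtain ⟨m, w, hm, horth, hrepr⟩ := exists_onb_cols B
  refine ⟨m, Matrix.of w, hm, ?_, ?_⟩
  · ext l l'
    rw [Matrix.mul_apply]
    simp only [Matrix.of_apply, Matrix.transpose_apply, Matrix.one_apply]
    exact horth l l'
  · ext a j
    rw [Matrix.mul_apply]
    simp only [Matrix.transpose_apply, Matrix.of_apply]
    rw [← hrepr j a]
    refine Finset.sum_congr rfl fun l _ => ?_
    rw [Matrix.mul_apply]
    simp only [Matrix.of_apply]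
    ring


lemma diag_transpose_mul_self_nonneg {p q : ℕ} (M : Matrix (Fin p) (Fin q) ℝ) (i : Fin q) :
    0 ≤ (Mᵀ * M) i i := by
  rw [Matrix.mul_apply]
  exact Finset.sum_nonneg fun a _ => by
    simp only [Matrix.transpose_apply]; exact mul_self_nonneg _


lemma conj_idem {p q : ℕ} (R : Matrix (Fin p) (Fin p) ℝ) (U : Matrix (Fin p) (Fin q) ℝ)
    (hRsym : Rᵀ = R) (hRR : R * R = R) :
    (R * U)ᵀ * (R * U) = Uᵀ * (R * U) := by
  rw [Matrix.transpose_mul, hRsym, Matrix.mul_assoc, ← Matrix.mul_assoc R R U, hRR]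


lemma trace_conj_eq {p q : ℕ} (R : Matrix (Fin p) (Fin p) ℝ) (hRsym : Rᵀ = R)
    (hRR : R * R = R) (M : Matrix (Fin p) (Fin q) ℝ) :
    Matrix.trace (R * (M * Mᵀ)) = Matrix.trace ((R * M) * (R * M)ᵀ) := by
  calc Matrix.trace (R * (M * Mᵀ))
      = Matrix.trace (R * R * (M * Mᵀ)) := by rw [hRR]
    _ = Matrix.trace (R * (R * (M * Mᵀ))) := by rw [Matrix.mul_assoc]
    _ = Matrix.trace ((R * (M * Mᵀ)) * R) := by rw [Matrix.trace_mul_comm]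
    _ = Matrix.trace ((R * M) * (Mᵀ * R)) := by
        have h : (R * (M * Mᵀ)) * R = (R * M) * (Mᵀ * R) := by
          simp only [Matrix.mul_assoc]
        rw [h]
    _ = Matrix.trace ((R * M) * (R * M)ᵀ) := by rw [Matrix.transpose_mul, hRsym]


lemma sq_sum_eq_trace {p q : ℕ} (M : Matrix (Fin p) (Fin q) ℝ) :
    ∑ i, ∑ j, (M i j)^2 = Matrix.trace (M * Mᵀ) := by
  rw [Matrix.trace]
  refine Finset.sum_congr rfl fun i _ => ?_
  rw [Matrix.diag_apply, Matrix.mul_apply]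
  exact Finset.sum_congr rfl fun j _ => by rw [Matrix.transpose_apply, sq]


lemma frob_bound {n d : ℕ} (X B : Matrix (Fin n) (Fin d) ℝ) (r : ℕ) (hBr : B.rank ≤ r)
    (hA : (X * Xᵀ).IsHermitian) :
    ∃ c : Fin n → ℝ, (∀ i, 0 ≤ c i) ∧ (∀ i, c i ≤ 1) ∧ ((n:ℝ) - r ≤ ∑ i, c i) ∧
      ∑ i, hA.eigenvalues i * c i ≤ ∑ i, ∑ j, (B i j - X i j)^2 := by
  obtain ⟨U, lam, hUtU, hUUt, hspec, hlam⟩ : ∃ (U : Matrix (Fin n) (Fin n) ℝ)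
      (lam : Fin n → ℝ), Uᵀ * U = 1 ∧ U * Uᵀ = 1 ∧
      X * Xᵀ = U * Matrix.diagonal lam * Uᵀ ∧ lam = hA.eigenvalues := by
    refine ⟨(hA.eigenvectorUnitary : Matrix (Fin n) (Fin n) ℝ), hA.eigenvalues, ?_, ?_, ?_, rfl⟩
    · have := Unitary.coe_star_mul_self hA.eigenvectorUnitary
      simpa [Matrix.star_eq_conjTranspose,
        Matrix.conjTranspose_eq_transpose_of_trivial] using this
    · have := Unitary.coe_mul_star_self hA.eigenvectorUnitary
      simpa [Matrix.star_eq_conjTranspose,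
        Matrix.conjTranspose_eq_transpose_of_trivial] using this
    · have := hA.spectral_theorem
      simpa [Matrix.star_eq_conjTranspose, Matrix.conjTranspose_eq_transpose_of_trivial,
        Function.comp] using this
  obtain ⟨m, W, hm, hWWt, hWB⟩ := exists_projW B
  set P : Matrix (Fin n) (Fin n) ℝ := Wᵀ * W with hP
  have hPsym : Pᵀ = P := by rw [hP, Matrix.transpose_mul, Matrix.transpose_transpose]
  have hPP : P * P = P := by
    rw [hP, Matrix.mul_assoc, ← Matrix.mul_assoc W, hWWt, Matrix.one_mul]
  have hPB : P * B = B := by rw [hP, Matrix.mul_assoc, hWB]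
  have htrP : Matrix.trace P = (m : ℝ) := by
    rw [hP, Matrix.trace_mul_comm, hWWt, Matrix.trace_one]
    simp
  set Q : Matrix (Fin n) (Fin n) ℝ := 1 - P with hQ
  have hQsym : Qᵀ = Q := by rw [hQ, Matrix.transpose_sub, Matrix.transpose_one, hPsym]
  have hQQ : Q * Q = Q := by
    have h : (1 - P) * (1 - P) = 1 - P := by
      simp only [Matrix.sub_mul, Matrix.mul_sub, Matrix.one_mul, Matrix.mul_one, hPP]
      abel
    rw [hQ]; exact h
  have hQB : Q * B = 0 := by
    rw [hQ, Matrix.sub_mul, Matrix.one_mul, hPB, sub_self]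
  refine ⟨fun i => (Uᵀ * (Q * U)) i i, ?_, ?_, ?_, ?_⟩
  · intro i
    show 0 ≤ (Uᵀ * (Q * U)) i i
    rw [← conj_idem Q U hQsym hQQ]
    exact diag_transpose_mul_self_nonneg _ i
  · intro i
    show (Uᵀ * (Q * U)) i i ≤ 1
    have h2 : Uᵀ * (Q * U) = Uᵀ * U - Uᵀ * (P * U) := by
      rw [hQ, Matrix.sub_mul, Matrix.one_mul, Matrix.mul_sub]
    have key : (Uᵀ * (Q * U)) i i = 1 - ((P * U)ᵀ * (P * U)) i i := by
      rw [h2, conj_idem P U hPsym hPP, Matrix.sub_apply, hUtU, Matrix.one_apply_eq]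
    rw [key]
    have := diag_transpose_mul_self_nonneg (P * U) i
    linarith
  · show (n:ℝ) - r ≤ ∑ i, (Uᵀ * (Q * U)) i i
    have h1 : ∑ i, (Uᵀ * (Q * U)) i i = Matrix.trace (Uᵀ * (Q * U)) := rfl
    rw [h1, Matrix.trace_mul_comm, Matrix.mul_assoc, hUUt, Matrix.mul_one, hQ,
      Matrix.trace_sub, htrP, Matrix.trace_one]
    have hmBr : m ≤ r := by rw [hm]; exact hBr
    have hmr : (m:ℝ) ≤ (r:ℝ) := Nat.cast_le.mpr hmBr
    simp only [Fintype.card_fin]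
    linarith
  · show ∑ i, hA.eigenvalues i * (Uᵀ * (Q * U)) i i ≤ ∑ i, ∑ j, (B i j - X i j)^2
    rw [← hlam]
    set D : Matrix (Fin n) (Fin d) ℝ := X - B with hD
    have hsq : ∑ i, ∑ j, (B i j - X i j)^2 = Matrix.trace (D * Dᵀ) := by
      rw [← sq_sum_eq_trace]
      refine Finset.sum_congr rfl fun i _ => Finset.sum_congr rfl fun j _ => ?_
      rw [hD, Matrix.sub_apply]; ring
    have hQD : Q * D = Q * X := by
      rw [hD, Matrix.mul_sub, hQB, sub_zero]
    have step1 : Matrix.trace (Q * (D * Dᵀ)) ≤ Matrix.trace (D * Dᵀ) := by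
      have hmat0 : ∀ G : Matrix (Fin n) (Fin n) ℝ, G - Q * G = P * G := by
        intro G
        rw [hQ, Matrix.sub_mul, Matrix.one_mul, sub_sub_cancel]
      have hmat : D * Dᵀ - Q * (D * Dᵀ) = P * (D * Dᵀ) := hmat0 (D * Dᵀ)
      have hsplit : Matrix.trace (D * Dᵀ) - Matrix.trace (Q * (D * Dᵀ))
          = Matrix.trace (P * (D * Dᵀ)) := by
        rw [← Matrix.trace_sub, hmat]
      have h0 : 0 ≤ Matrix.trace ((P * D) * (P * D)ᵀ) := by
        rw [← sq_sum_eq_trace]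
        exact Finset.sum_nonneg fun i _ => Finset.sum_nonneg fun j _ => sq_nonneg _
      have := trace_conj_eq P hPsym hPP D
      linarith
    have step2 : Matrix.trace (Q * (D * Dᵀ)) = Matrix.trace (Q * (X * Xᵀ)) := by
      rw [trace_conj_eq Q hQsym hQQ D, trace_conj_eq Q hQsym hQQ X, hQD]
    have step3 : Matrix.trace (Q * (X * Xᵀ)) = ∑ i, lam i * ((Uᵀ * (Q * U)) i i) := by
      rw [hspec]
      have hassoc : Q * (U * Matrix.diagonal lam * Uᵀ)
          = (Q * U) * Matrix.diagonal lam * Uᵀ := by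
        rw [← Matrix.mul_assoc, ← Matrix.mul_assoc]
      rw [hassoc, Matrix.trace_mul_cycle, ← Matrix.mul_assoc]
      rw [Matrix.trace]
      refine Finset.sum_congr rfl fun i _ => ?_
      rw [Matrix.diag_apply, Matrix.mul_diagonal, Matrix.mul_assoc]
      ring
    rw [hsq]
    calc ∑ i, lam i * ((Uᵀ * (Q * U)) i i) = Matrix.trace (Q * (X * Xᵀ)) := step3.symm
      _ = Matrix.trace (Q * (D * Dᵀ)) := step2.symm
      _ ≤ Matrix.trace (D * Dᵀ) := step1


lemma subdet_eq_det_gram {n d : ℕ} (X : Matrix (Fin n) (Fin d) ℝ) (T : Finset (Fin n)) :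
    subdet (X * Xᵀ) T = ((rowsOf X T) * (rowsOf X T)ᵀ).det := by
  unfold subdet rowsOf
  refine congrArg Matrix.det ?_
  ext a b
  rw [Matrix.submatrix_apply, Matrix.mul_apply, Matrix.mul_apply]
  refine Finset.sum_congr rfl fun j _ => ?_
  rfl


lemma subdet_insert_eq_zero {n d : ℕ} (X : Matrix (Fin n) (Fin d) ℝ) (S : Finset (Fin n))
    (i : Fin n) (hi : i ∉ S)
    (h0 : ((rowsOf X S) * (rowsOf X S)ᵀ).det = 0) :
    subdet (X * Xᵀ) (insert i S) = 0 := by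
  rw [subdet_eq_det_gram]
  rw [← Matrix.exists_mulVec_eq_zero_iff] at h0 ⊢
  obtain ⟨v, hv, hGv⟩ := h0
  have hu : v ᵥ* (rowsOf X S) = 0 := by
    have h1 : v ⬝ᵥ (((rowsOf X S) * (rowsOf X S)ᵀ) *ᵥ v) = 0 := by rw [hGv]; simp
    rw [← Matrix.mulVec_mulVec, Matrix.mulVec_transpose, Matrix.dotProduct_mulVec] at h1
    exact (dotProduct_self_eq_zero).mp h1
  set w' : Fin n → ℝ := fun x => if h : x ∈ S then v ⟨x, h⟩ else 0 with hw'
  refine ⟨fun t => w' (t : Fin n), ?_, ?_⟩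
  · intro hzero
    apply hv
    funext a
    have := congrFun hzero ⟨(a : Fin n), Finset.mem_insert_of_mem a.2⟩
    simp only [Pi.zero_apply] at this ⊢
    rw [hw'] at this
    simpa [dif_pos a.2] using this
  · have hvm : (fun t : {x // x ∈ insert i S} => w' (t : Fin n)) ᵥ* (rowsOf X (insert i S)) = 0 := by
      funext j
      rw [Matrix.vecMul, dotProduct]
      have hsum : ∑ t : {x // x ∈ insert i S}, w' (t : Fin n) * (rowsOf X (insert i S)) t j
          = ∑ x ∈ insert i S, w' x * X x j := by
        rw [← Finset.sum_coe_sort (insert i S) (fun x => w' x * X x j)]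
        rfl
      rw [hsum, Finset.sum_insert hi]
      have hwi : w' i = 0 := by rw [hw']; simp [hi]
      rw [hwi, zero_mul, zero_add]
      have h2 : ∑ x ∈ S, w' x * X x j = ∑ a : {x // x ∈ S}, v a * X (a : Fin n) j := by
        rw [← Finset.sum_coe_sort S (fun x => w' x * X x j)]
        refine Finset.sum_congr rfl fun a _ => ?_
        rw [hw']
        simp [dif_pos a.2]
      rw [h2]
      have := congrFun hu j
      simpa [Matrix.vecMul, dotProduct, rowsOf] using this
    rw [← Matrix.mulVec_mulVec, Matrix.mulVec_transpose, hvm]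
    simp


lemma err_identity {n d : ℕ} (X : Matrix (Fin n) (Fin d) ℝ) (S : Finset (Fin n))
    (hG : IsUnit ((rowsOf X S) * (rowsOf X S)ᵀ).det) :
    ((rowsOf X S) * (rowsOf X S)ᵀ).det *
      (∑ i, ∑ j, ((X * ((rowsOf X S)ᵀ * ((((rowsOf X S) * (rowsOf X S)ᵀ))⁻¹ * rowsOf X S))) i j
          - X i j) ^ 2)
    = ∑ i ∈ Sᶜ, subdet (X * Xᵀ) (insert i S) := by
  obtain ⟨Y, hYdef⟩ : ∃ Y, Y = rowsOf X S := ⟨_, rfl⟩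
  rw [← hYdef] at hG ⊢
  obtain ⟨G, hGdef⟩ : ∃ G, G = Y * Yᵀ := ⟨_, rfl⟩
  rw [← hGdef] at hG ⊢
  obtain ⟨P, hPdef⟩ : ∃ P, P = Yᵀ * (G⁻¹ * Y) := ⟨_, rfl⟩
  rw [← hPdef]
  haveI : Invertible G := G.invertibleOfIsUnitDet hG
  have hGG : G * G⁻¹ = 1 := Matrix.mul_nonsing_inv _ hG
  have hGsym : Gᵀ = G := by rw [hGdef, Matrix.transpose_mul, Matrix.transpose_transpose]
  have hGinvsym : (G⁻¹)ᵀ = G⁻¹ := by rw [Matrix.transpose_nonsing_inv, hGsym]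
  have hYP : Y * P = Y := by
    conv_lhs => rw [hPdef]
    rw [← Matrix.mul_assoc Y Yᵀ (G⁻¹ * Y), ← hGdef, ← Matrix.mul_assoc G G⁻¹ Y, hGG,
      Matrix.one_mul]
  have hPsym : Pᵀ = P := by
    rw [hPdef, Matrix.transpose_mul, Matrix.transpose_mul, hGinvsym,
      Matrix.transpose_transpose, Matrix.mul_assoc]
  have hPP : P * P = P := by
    conv_lhs => rw [hPdef]
    simp only [Matrix.mul_assoc]
    rw [← Matrix.mul_assoc Y Yᵀ (G⁻¹ * Y), ← hGdef, ← Matrix.mul_assoc G G⁻¹ Y, hGG,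
      Matrix.one_mul, ← hPdef]
  -- row entry helpers
  have hYent : ∀ (a : {x // x ∈ S}) (j : Fin d), Y a j = X (a : Fin n) j := by
    intro a j; rw [hYdef]; rfl
  have hXYent : ∀ (i : Fin n) (a : {x // x ∈ S}), (X * Yᵀ) i a = (X * Xᵀ) i (a : Fin n) := by
    intro i a
    rw [Matrix.mul_apply, Matrix.mul_apply]
    refine Finset.sum_congr rfl fun j _ => ?_
    simp only [Matrix.transpose_apply]
    rw [hYent]
  have hYXent : ∀ (a : {x // x ∈ S}) (i : Fin n), (Y * Xᵀ) a i = (X * Xᵀ) (a : Fin n) i := by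
    intro a i
    rw [Matrix.mul_apply, Matrix.mul_apply]
    refine Finset.sum_congr rfl fun j _ => ?_
    simp only [Matrix.transpose_apply]
    rw [hYent]
  have hGent : ∀ (a b : {x // x ∈ S}), G a b = (X * Xᵀ) (a : Fin n) (b : Fin n) := by
    intro a b
    rw [hGdef, Matrix.mul_apply, Matrix.mul_apply]
    refine Finset.sum_congr rfl fun j _ => ?_
    simp only [Matrix.transpose_apply]
    rw [hYent, hYent]
  -- the diagonal error terms
  have herr : ∀ i : Fin n, ∑ j, ((X * P) i j - X i j)^2
      = (X * Xᵀ) i i - ((X * Yᵀ) * (G⁻¹ * (Y * Xᵀ))) i i := by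
    intro i
    have hEE : (X * P - X) * (X * P - X)ᵀ = X * Xᵀ - (X * Yᵀ) * (G⁻¹ * (Y * Xᵀ)) := by
      rw [Matrix.transpose_sub, Matrix.transpose_mul, hPsym]
      rw [Matrix.sub_mul, Matrix.mul_sub, Matrix.mul_sub]
      have h2 : (X * P) * (P * Xᵀ) = X * (P * Xᵀ) := by
        rw [Matrix.mul_assoc, ← Matrix.mul_assoc P P Xᵀ, hPP]
      have h3 : (X * P) * Xᵀ = X * (P * Xᵀ) := Matrix.mul_assoc _ _ _
      have h4 : X * (P * Xᵀ) = (X * Yᵀ) * (G⁻¹ * (Y * Xᵀ)) := by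
        rw [hPdef]
        simp only [Matrix.mul_assoc]
      rw [h2, h3, h4]
      abel
    have hsum : ∑ j, ((X * P) i j - X i j)^2
        = ((X * P - X) * (X * P - X)ᵀ) i i := by
      rw [Matrix.mul_apply]
      exact Finset.sum_congr rfl fun j _ => by
        rw [Matrix.transpose_apply, Matrix.sub_apply, sq]
    rw [hsum, hEE, Matrix.sub_apply]
  -- Claim A : i ∈ S gives zero error
  have claimA : ∀ i : Fin n, i ∈ S → ((X * Yᵀ) * (G⁻¹ * (Y * Xᵀ))) i i = (X * Xᵀ) i i := by
    intro i hiS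
    have hrow : ∀ l : {x // x ∈ S}, (X * Yᵀ) i l = G ⟨i, hiS⟩ l := fun l => by
      rw [hXYent, hGent]
    calc ((X * Yᵀ) * (G⁻¹ * (Y * Xᵀ))) i i
        = ∑ l, (X * Yᵀ) i l * (G⁻¹ * (Y * Xᵀ)) l i := Matrix.mul_apply
      _ = ∑ l, G ⟨i, hiS⟩ l * (G⁻¹ * (Y * Xᵀ)) l i :=
          Finset.sum_congr rfl fun l _ => by rw [hrow]
      _ = (G * (G⁻¹ * (Y * Xᵀ))) ⟨i, hiS⟩ i := (Matrix.mul_apply).symm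
      _ = (Y * Xᵀ) ⟨i, hiS⟩ i := by
          rw [← Matrix.mul_assoc, hGG, Matrix.one_mul]
      _ = (X * Xᵀ) i i := hYXent _ _
  -- Claim B : i ∉ S Schur complement
  have claimB : ∀ i : Fin n, i ∉ S →
      subdet (X * Xᵀ) (insert i S)
        = G.det * ((X * Xᵀ) i i - ((X * Yᵀ) * (G⁻¹ * (Y * Xᵀ))) i i) := by
    intro i hiS
    have hin : ∀ a : {x // x ∈ S}, (a : Fin n) ∈ insert i S :=
      fun a => Finset.mem_insert_of_mem a.2
    let e : ({x // x ∈ S} ⊕ Unit) ≃ {x // x ∈ insert i S} :=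
      { toFun := Sum.elim (fun a => ⟨a, hin a⟩) (fun _ => ⟨i, Finset.mem_insert_self i S⟩)
        invFun := fun t => if h : (t : Fin n) ∈ S then Sum.inl ⟨t, h⟩ else Sum.inr ()
        left_inv := by
          rintro (a | u)
          · simp [a.2]
          · simp [hiS]
        right_inv := by
          rintro ⟨t, ht⟩
          rcases Finset.mem_insert.1 ht with h | h
          · subst h
            simp [hiS]
          · simp [h] }
    have hM : ((X * Xᵀ).submatrix
          (fun a : {x // x ∈ insert i S} => (a : Fin n))
          (fun b : {x // x ∈ insert i S} => (b : Fin n))).submatrix e e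
        = fromBlocks G
            (Matrix.of fun (a : {x // x ∈ S}) (_ : Unit) => (X * Xᵀ) (a : Fin n) i)
            (Matrix.of fun (_ : Unit) (b : {x // x ∈ S}) => (X * Xᵀ) i (b : Fin n))
            (Matrix.of fun (_ : Unit) (_ : Unit) => (X * Xᵀ) i i) := by
      ext a b
      cases a with
      | inl a =>
        cases b with
        | inl b => simp [e, fromBlocks, hGent]
        | inr b => simp [e, fromBlocks]
      | inr a =>
        cases b with
        | inl b => simp [e, fromBlocks]
        | inr b => simp [e, fromBlocks]
    have hdet : subdet (X * Xᵀ) (insert i S)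
        = (fromBlocks G
            (Matrix.of fun (a : {x // x ∈ S}) (_ : Unit) => (X * Xᵀ) (a : Fin n) i)
            (Matrix.of fun (_ : Unit) (b : {x // x ∈ S}) => (X * Xᵀ) i (b : Fin n))
            (Matrix.of fun (_ : Unit) (_ : Unit) => (X * Xᵀ) i i)).det := by
      rw [subdet, ← hM, Matrix.det_submatrix_equiv_self]
    rw [hdet, Matrix.det_fromBlocks₁₁]
    congr 1
    rw [Matrix.det_unique]
    rw [Matrix.sub_apply, Matrix.of_apply]
    congr 1
    rw [Matrix.invOf_eq_nonsing_inv]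
    -- entry computation
    have hBC : ((Matrix.of fun (_ : Unit) (b : {x // x ∈ S}) => (X * Xᵀ) i (b : Fin n)) * G⁻¹ *
          (Matrix.of fun (a : {x // x ∈ S}) (_ : Unit) => (X * Xᵀ) (a : Fin n) i))
          default default
        = ((X * Yᵀ) * (G⁻¹ * (Y * Xᵀ))) i i := by
      have lhs_eq : ((Matrix.of fun (_ : Unit) (b : {x // x ∈ S}) => (X * Xᵀ) i (b : Fin n)) * G⁻¹ *
            (Matrix.of fun (a : {x // x ∈ S}) (_ : Unit) => (X * Xᵀ) (a : Fin n) i))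
            default default
          = ∑ b : {x // x ∈ S}, ∑ a : {x // x ∈ S},
              (X * Xᵀ) i (a : Fin n) * G⁻¹ a b * (X * Xᵀ) (b : Fin n) i := by
        rw [Matrix.mul_apply]
        refine Finset.sum_congr rfl fun b _ => ?_
        rw [Matrix.mul_apply, Finset.sum_mul]
        refine Finset.sum_congr rfl fun a _ => ?_
        simp only [Matrix.of_apply]
      have rhs_eq : ((X * Yᵀ) * (G⁻¹ * (Y * Xᵀ))) i i
          = ∑ a : {x // x ∈ S}, ∑ b : {x // x ∈ S},
              (X * Xᵀ) i (a : Fin n) * G⁻¹ a b * (X * Xᵀ) (b : Fin n) i := by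
        rw [Matrix.mul_apply]
        refine Finset.sum_congr rfl fun a _ => ?_
        rw [show (G⁻¹ * (Y * Xᵀ)) a i = ∑ b, G⁻¹ a b * (Y * Xᵀ) b i from Matrix.mul_apply,
          hXYent, Finset.mul_sum]
        refine Finset.sum_congr rfl fun b _ => ?_
        rw [hYXent]
        ring
      rw [lhs_eq, rhs_eq, Finset.sum_comm]
    rw [hBC]
  -- assemble
  have hfull : ∑ i, ∑ j, ((X * P) i j - X i j)^2
      = ∑ i, ((X * Xᵀ) i i - ((X * Yᵀ) * (G⁻¹ * (Y * Xᵀ))) i i) :=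
    Finset.sum_congr rfl fun i _ => herr i
  rw [hfull, Finset.mul_sum]
  have hzero : ∀ i ∈ (Finset.univ : Finset (Fin n)), i ∉ Sᶜ →
      G.det * ((X * Xᵀ) i i - ((X * Yᵀ) * (G⁻¹ * (Y * Xᵀ))) i i) = 0 := by
    intro i _ hi
    rw [Finset.mem_compl, not_not] at hi
    rw [claimA i hi, sub_self, mul_zero]
  rw [← Finset.sum_subset (Finset.subset_univ Sᶜ) hzero]
  refine Finset.sum_congr rfl fun i hi => ?_
  rw [Finset.mem_compl] at hi
  rw [claimB i hi]

end Aux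

/-- Low-rank approximation guarantee for `k`-DPPs: if `S ~ k-DPP_L(XXᵀ)` with
`k ≥ r + r/ε − 1`, then `E‖X X_S† X_S − X‖_F² ≤ (1+ε)‖X_{(r)} − X‖_F²`, where the
right-hand side (the best rank-`r` Frobenius approximation error) is expressed by
quantifying over all matrices `B` of rank at most `r`.  (On the support of the `k`-DPP,
`X_S` has full row rank and `X_S† X_S = X_Sᵀ(X_S X_Sᵀ)⁻¹X_S`.) -/
theorem kdpp_low_rank_approximation {n d : ℕ} (X : Matrix (Fin n) (Fin d) ℝ)
    (r k : ℕ) (ε : ℝ) (hε : 0 < ε) (hrk : r ≤ k)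
    (hk : (k : ℝ) ≥ (r : ℝ) + (r : ℝ) / ε - 1)
    (B : Matrix (Fin n) (Fin d) ℝ) (hB : B.rank ≤ r) :
    ∑ S ∈ Finset.powersetCard k (Finset.univ : Finset (Fin n)),
      (subdet (X * Xᵀ) S /
          (∑ T ∈ Finset.powersetCard k (Finset.univ : Finset (Fin n)), subdet (X * Xᵀ) T)) *
        (∑ i, ∑ j,
          ((X * ((rowsOf X S)ᵀ * (((rowsOf X S) * (rowsOf X S)ᵀ)⁻¹ * rowsOf X S))) i j
            - X i j) ^ 2)
      ≤ (1 + ε) * ∑ i, ∑ j, (B i j - X i j) ^ 2 := by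
  have hA : (X * Xᵀ).IsHermitian := by
    have h := Matrix.isHermitian_mul_conjTranspose_self X
    rwa [Matrix.conjTranspose_eq_transpose_of_trivial] at h
  have hpsd : (X * Xᵀ).PosSemidef := by
    have h := Matrix.posSemidef_self_mul_conjTranspose X
    rwa [Matrix.conjTranspose_eq_transpose_of_trivial] at h
  have hlam_nonneg : ∀ i, 0 ≤ hA.eigenvalues i := fun i => hpsd.eigenvalues_nonneg i
  set Z : ℝ := ∑ T ∈ Finset.powersetCard k (Finset.univ : Finset (Fin n)),
      subdet (X * Xᵀ) T with hZdef
  have hZesym : Z = ∑ T ∈ Finset.powersetCard k Finset.univ, ∏ i ∈ T, hA.eigenvalues i :=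
    sum_subdet_eq_esymm (X * Xᵀ) hA k
  have hZnn : 0 ≤ Z := by
    rw [hZesym]
    exact Finset.sum_nonneg fun T _ => Finset.prod_nonneg fun i _ => hlam_nonneg i
  have hFrob_nn : 0 ≤ ∑ i, ∑ j, (B i j - X i j) ^ 2 :=
    Finset.sum_nonneg fun i _ => Finset.sum_nonneg fun j _ => sq_nonneg _
  by_cases hZ : Z = 0
  · simp only [hZ, div_zero, zero_mul, Finset.sum_const_zero]
    positivity
  · have hZpos : 0 < Z := lt_of_le_of_ne hZnn (Ne.symm hZ)
    -- rewrite LHS as a single fraction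
    have hLHS : ∑ S ∈ Finset.powersetCard k (Finset.univ : Finset (Fin n)),
        (subdet (X * Xᵀ) S / Z) *
          (∑ i, ∑ j,
            ((X * ((rowsOf X S)ᵀ * (((rowsOf X S) * (rowsOf X S)ᵀ)⁻¹ * rowsOf X S))) i j
              - X i j) ^ 2)
        = (∑ S ∈ Finset.powersetCard k (Finset.univ : Finset (Fin n)),
            subdet (X * Xᵀ) S *
              (∑ i, ∑ j,
                ((X * ((rowsOf X S)ᵀ * (((rowsOf X S) * (rowsOf X S)ᵀ)⁻¹ * rowsOf X S))) i j
                  - X i j) ^ 2)) / Z := by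
      rw [Finset.sum_div]
      exact Finset.sum_congr rfl fun S _ => by rw [div_mul_eq_mul_div]
    rw [hLHS, div_le_iff₀ hZpos]
    -- numerator identity
    have hNum : ∀ S ∈ Finset.powersetCard k (Finset.univ : Finset (Fin n)),
        subdet (X * Xᵀ) S *
          (∑ i, ∑ j,
            ((X * ((rowsOf X S)ᵀ * (((rowsOf X S) * (rowsOf X S)ᵀ)⁻¹ * rowsOf X S))) i j
              - X i j) ^ 2)
        = ∑ i ∈ Sᶜ, subdet (X * Xᵀ) (insert i S) := by
      intro S _
      by_cases hu : IsUnit ((rowsOf X S) * (rowsOf X S)ᵀ).det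
      · rw [subdet_eq_det_gram]
        exact err_identity X S hu
      · have hdet0 : ((rowsOf X S) * (rowsOf X S)ᵀ).det = 0 := by
          by_contra hne
          exact hu (isUnit_iff_ne_zero.mpr hne)
        rw [subdet_eq_det_gram, hdet0, zero_mul]
        symm
        refine Finset.sum_eq_zero fun i hi => ?_
        rw [Finset.mem_compl] at hi
        exact subdet_insert_eq_zero X S i hi hdet0
    rw [Finset.sum_congr rfl hNum]
    rw [count_pairs (fun T _ => subdet (X * Xᵀ) T)]
    have hInner : ∀ T ∈ Finset.powersetCard (k+1) (Finset.univ : Finset (Fin n)),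
        ∑ _i ∈ T, subdet (X * Xᵀ) T = ((k : ℝ) + 1) * subdet (X * Xᵀ) T := by
      intro T hT
      rw [Finset.mem_powersetCard_univ] at hT
      rw [Finset.sum_const, hT, nsmul_eq_mul]
      push_cast
      ring
    rw [Finset.sum_congr rfl hInner, ← Finset.mul_sum]
    have hE1 : ∑ T ∈ Finset.powersetCard (k+1) (Finset.univ : Finset (Fin n)),
        subdet (X * Xᵀ) T
        = ∑ T ∈ Finset.powersetCard (k+1) Finset.univ, ∏ i ∈ T, hA.eigenvalues i :=
      sum_subdet_eq_esymm (X * Xᵀ) hA (k+1)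
    rw [hE1]
    set E1 : ℝ := ∑ T ∈ Finset.powersetCard (k+1) Finset.univ, ∏ i ∈ T, hA.eigenvalues i
      with hE1def
    have hE1nn : 0 ≤ E1 :=
      Finset.sum_nonneg fun T _ => Finset.prod_nonneg fun i _ => hlam_nonneg i
    obtain ⟨c, hc0, hc1, hcs, hcb⟩ := frob_bound X B r hB hA
    have htail : ((k : ℝ) + 1 - r) * E1
        ≤ (∑ i, hA.eigenvalues i * c i) * Z := by
      rw [hZesym]
      exact esymm_tail_bound hA.eigenvalues c hlam_nonneg hc0 hc1 hcs
    have hcoef : ((k : ℝ) + 1) ≤ (1 + ε) * ((k : ℝ) + 1 - r) := by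
      have hkr : (r : ℝ) / ε ≤ (k : ℝ) + 1 - r := by linarith
      have h2 : (r : ℝ) ≤ ε * ((k : ℝ) + 1 - r) := by
        have := mul_le_mul_of_nonneg_left hkr (le_of_lt hε)
        rwa [mul_div_cancel₀ _ (ne_of_gt hε)] at this
      nlinarith
    have hlamc_nn : 0 ≤ ∑ i, hA.eigenvalues i * c i :=
      Finset.sum_nonneg fun i _ => mul_nonneg (hlam_nonneg i) (hc0 i)
    calc ((k : ℝ) + 1) * E1 ≤ (1 + ε) * ((k : ℝ) + 1 - r) * E1 :=
          mul_le_mul_of_nonneg_right hcoef hE1nn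
      _ = (1 + ε) * (((k : ℝ) + 1 - r) * E1) := by ring
      _ ≤ (1 + ε) * ((∑ i, hA.eigenvalues i * c i) * Z) := by
          refine mul_le_mul_of_nonneg_left htail (by linarith)
      _ ≤ (1 + ε) * ((∑ i, ∑ j, (B i j - X i j) ^ 2) * Z) := by
          refine mul_le_mul_of_nonneg_left
            (mul_le_mul_of_nonneg_right hcb hZnn) (by linarith)
      _ = (1 + ε) * (∑ i, ∑ j, (B i j - X i j) ^ 2) * Z := by ring
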